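/- Let a ∈ (-1,1) and let φ : (0,∞) → ℝ be a C² solution of the ODE -φ(y) + (a/y)·φ'(y) + φ''(y) = 0 with φ(0⁺)=1, φ(∞)=0, such that all the integrals below converge. Then (a+3)·∫₀^∞ t^{a+2} φ(t)² dt = (3-a)·∫₀^∞ t^{a+2} φ'(t)² dt. -/

import Mathlib

open Set Filter MeasureTheory

/-- Integration-by-parts identity for the Caffarelli–Silvestre profile:
`(a+3)·∫ t^{a+2} φ² = (3-a)·∫ t^{a+2} (φ')²`. -/
theorem stmt0 (a : ℝ) (ha : a ∈ Set.Ioo (-1 : ℝ) 1)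
    (φ : ℝ → ℝ) (hφ : ContDiffOn ℝ 2 φ (Set.Ioi 0))
    (hODE : ∀ y ∈ Set.Ioi (0 : ℝ),
      -φ y + (a / y) * deriv φ y + deriv (deriv φ) y = 0)
    (h0 : Tendsto φ (nhdsWithin 0 (Set.Ioi 0)) (nhds 1))
    (hinf : Tendsto φ atTop (nhds 0))
    (hi1 : IntegrableOn (fun t => t ^ (a + 2) * (φ t) ^ 2) (Set.Ioi 0))
    (hi2 : IntegrableOn (fun t => t ^ (a + 2) * (deriv φ t) ^ 2) (Set.Ioi 0))
    (hi3 : IntegrableOn (fun t => t ^ (a + 3) * φ t * deriv φ t) (Set.Ioi 0))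
    (hi4 : IntegrableOn (fun t => t ^ (a + 3) * deriv φ t * deriv (deriv φ) t) (Set.Ioi 0))
    (hb1 : Tendsto (fun t => t ^ (a + 3) * (φ t) ^ 2) (nhdsWithin 0 (Set.Ioi 0)) (nhds 0))
    (hb2 : Tendsto (fun t => t ^ (a + 3) * (φ t) ^ 2) atTop (nhds 0))
    (hb3 : Tendsto (fun t => t ^ (a + 3) * (deriv φ t) ^ 2) (nhdsWithin 0 (Set.Ioi 0)) (nhds 0))
    (hb4 : Tendsto (fun t => t ^ (a + 3) * (deriv φ t) ^ 2) atTop (nhds 0)) :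
    (a + 3) * ∫ t in Set.Ioi (0 : ℝ), t ^ (a + 2) * (φ t) ^ 2
      = (3 - a) * ∫ t in Set.Ioi (0 : ℝ), t ^ (a + 2) * (deriv φ t) ^ 2 := by
  obtain ⟨ha1, ha2⟩ := ha
  have ha3 : (0:ℝ) < a + 3 := by linarith
  -- derivatives of φ and deriv φ on Ioi 0
  have hφ' : ∀ x ∈ Set.Ioi (0:ℝ), HasDerivAt φ (deriv φ x) x := by
    intro x hx
    have h := hφ.contDiffAt (isOpen_Ioi.mem_nhds hx)
    exact (h.differentiableAt (by norm_num)).hasDerivAt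
  have hφ1 : ContDiffOn ℝ 1 (deriv φ) (Set.Ioi 0) :=
    hφ.deriv_of_isOpen isOpen_Ioi (by norm_num)
  have hφ'' : ∀ x ∈ Set.Ioi (0:ℝ), HasDerivAt (deriv φ) (deriv (deriv φ) x) x := by
    intro x hx
    have h := hφ1.contDiffAt (isOpen_Ioi.mem_nhds hx)
    exact (h.differentiableAt (by norm_num)).hasDerivAt
  have hpow : ∀ x ∈ Set.Ioi (0:ℝ), HasDerivAt (fun t : ℝ => t ^ (a+3))
      ((a+3) * x ^ (a+2)) x := by
    intro x hx
    have h := Real.hasDerivAt_rpow_const (p := a+3) (Or.inl (ne_of_gt hx))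
    have : a + 3 - 1 = a + 2 := by ring
    rwa [this] at h
  -- a generic integration-by-parts lemma for ψ ∈ {φ, deriv φ}
  have key : ∀ ψ : ℝ → ℝ, (∀ x ∈ Set.Ioi (0:ℝ), HasDerivAt ψ (deriv ψ x) x) →
      IntegrableOn (fun t => t ^ (a + 2) * (ψ t) ^ 2) (Set.Ioi 0) →
      IntegrableOn (fun t => t ^ (a + 3) * ψ t * deriv ψ t) (Set.Ioi 0) →
      Tendsto (fun t => t ^ (a + 3) * (ψ t) ^ 2) (nhdsWithin 0 (Set.Ioi 0)) (nhds 0) →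
      Tendsto (fun t => t ^ (a + 3) * (ψ t) ^ 2) atTop (nhds 0) →
      (a+3) * (∫ t in Set.Ioi (0:ℝ), t ^ (a + 2) * (ψ t) ^ 2)
        + 2 * (∫ t in Set.Ioi (0:ℝ), t ^ (a + 3) * ψ t * deriv ψ t) = 0 := by
    intro ψ hψ hI1 hI3 hB1 hB2
    set F : ℝ → ℝ := fun t => t ^ (a+3) * (ψ t) ^ 2 with hF
    set F' : ℝ → ℝ := fun t => (a+3) * (t ^ (a+2) * (ψ t)^2)
        + 2 * (t ^ (a+3) * ψ t * deriv ψ t) with hF'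
    have hF0 : F 0 = 0 := by
      simp [hF, Real.zero_rpow (ne_of_gt ha3)]
    have hder : ∀ x ∈ Set.Ioi (0:ℝ), HasDerivAt F (F' x) x := by
      intro x hx
      have h1 := (hpow x hx).mul ((hψ x hx).pow 2)
      refine h1.congr_deriv ?_
      simp only [hF', Pi.pow_apply]
      push_cast
      ring
    have hcont : ContinuousWithinAt F (Set.Ici 0) 0 := by
      rw [← continuousWithinAt_Ioi_iff_Ici]
      unfold ContinuousWithinAt
      rw [hF0]
      exact hB1
    have hint : IntegrableOn F' (Set.Ioi 0) := by
      exact ((hI1.const_mul _).add (hI3.const_mul _))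
    have := integral_Ioi_of_hasDerivAt_of_tendsto hcont hder hint hB2
    rw [hF0, sub_zero] at this
    rw [MeasureTheory.integral_add (hI1.const_mul _) (hI3.const_mul _)] at this
    rw [MeasureTheory.integral_const_mul, MeasureTheory.integral_const_mul] at this
    linarith [this]
  have A := key φ hφ' hi1 hi3 hb1 hb2
  have B := key (deriv φ) hφ'' hi2 hi4 hb3 hb4
  -- use the ODE to rewrite I4
  have C : (∫ t in Set.Ioi (0:ℝ), t ^ (a + 3) * deriv φ t * deriv (deriv φ) t)
      = (∫ t in Set.Ioi (0:ℝ), t ^ (a + 3) * φ t * deriv φ t)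
        - a * (∫ t in Set.Ioi (0:ℝ), t ^ (a + 2) * (deriv φ t) ^ 2) := by
    rw [← MeasureTheory.integral_const_mul, ← MeasureTheory.integral_sub hi3 (hi2.const_mul a)]
    apply MeasureTheory.setIntegral_congr_fun measurableSet_Ioi
    intro t ht
    have h20 : deriv (deriv φ) t = φ t - (a / t) * deriv φ t := by
      have := hODE t ht
      linarith
    have hne : t ≠ 0 := ne_of_gt ht
    have hts : t ^ (a+3) = t * t ^ (a+2) := by
      rw [show a+3 = 1+(a+2) by ring, Real.rpow_add ht, Real.rpow_one]
    simp only []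
    rw [h20, hts]
    field_simp
  linarith [A, B, C]
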